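/- arXiv:2309.16094 — 4 statements merged into one kernel-verified Lean document; each statement's English description precedes it below -/
import Mathlib

section
/- Let y, z ∈ ℂ with |y| < 1, |z| < 1, y ≠ 1 and y ≠ −1. Then the infinite product over all pairs of positive integers (j,k) with j ≤ k and gcd(j,k) = 1 of (1 + y^j z^k)^(1/k) equals ((1 − yz)/(1 − z))^(y/(1 − y)) · ((1 − z²)/(1 − y²z²))^(y²/(1 − y²)). -/
open Complex

private lemma re_pos_of_norm_lt_one {w : ℂ} (hw : ‖w‖ < 1) : 0 < (1 - w).re := by
  have h1 : |w.re| ≤ ‖w‖ := by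
    have := Complex.abs_re_le_norm w
    exact this
  have h2 : w.re ≤ |w.re| := le_abs_self _
  simp only [Complex.sub_re, Complex.one_re]
  linarith

private lemma one_sub_ne_zero_of_norm_lt_one {w : ℂ} (hw : ‖w‖ < 1) : 1 - w ≠ 0 := by
  intro h
  have := re_pos_of_norm_lt_one hw
  rw [h] at this
  simp at this

private lemma log_div_of_re_pos {A B : ℂ} (hA : 0 < A.re) (hB : 0 < B.re) :
    Complex.log (A / B) = Complex.log A - Complex.log B := by
  have hA0 : A ≠ 0 := fun h => by simp [h] at hA
  have hB0 : B ≠ 0 := fun h => by simp [h] at hB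
  have hargA : |A.arg| < Real.pi / 2 := Complex.abs_arg_lt_pi_div_two_iff.mpr (Or.inl hA)
  have hargB : |B.arg| < Real.pi / 2 := Complex.abs_arg_lt_pi_div_two_iff.mpr (Or.inl hB)
  rw [abs_lt] at hargA hargB
  have h1 : A / B = Complex.exp (Complex.log A - Complex.log B) := by
    rw [Complex.exp_sub, Complex.exp_log hA0, Complex.exp_log hB0]
  rw [h1, Complex.log_exp]
  · simp only [Complex.sub_im, Complex.log_im]; linarith
  · simp only [Complex.sub_im, Complex.log_im]; linarith

private lemma norm_term_lt_one {y z : ℂ} (hy : ‖y‖ < 1) (hz : ‖z‖ < 1) {j k : ℕ}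
    (hj : 0 < j) (hk : 0 < k) : ‖y ^ j * z ^ k‖ < 1 := by
  rw [norm_mul, norm_pow, norm_pow]
  have h1 : ‖y‖ ^ j ≤ ‖y‖ := by
    calc ‖y‖ ^ j ≤ ‖y‖ ^ 1 := pow_le_pow_of_le_one (norm_nonneg y) hy.le hj
    _ = ‖y‖ := pow_one _
  have h2 : ‖z‖ ^ k ≤ 1 := pow_le_one₀ (norm_nonneg z) hz.le
  nlinarith [pow_nonneg (norm_nonneg y) j, pow_nonneg (norm_nonneg z) k, norm_nonneg y]

set_option maxHeartbeats 1000000 in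
private lemma hasSum_G (y z : ℂ) (hy : ‖y‖ < 1) (hz : ‖z‖ < 1) (hy1 : y ≠ 1) :
    HasSum (fun p : ℕ × ℕ => if 1 ≤ p.1 ∧ p.1 ≤ p.2 then y ^ p.1 * z ^ p.2 / (p.2 : ℂ) else 0)
      (y / (1 - y) * (Complex.log (1 - y * z) - Complex.log (1 - z))) := by
  classical
  have hyz : ‖y * z‖ < 1 := by
    have h := norm_mul y z
    nlinarith [norm_nonneg y, norm_nonneg z]
  set S := y / (1 - y) * (Complex.log (1 - y * z) - Complex.log (1 - z)) with hS
  set Gf : ℕ × ℕ → ℂ :=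
    fun p => if 1 ≤ p.2 ∧ p.2 ≤ p.1 then y ^ p.2 * z ^ p.1 / (p.1 : ℂ) else 0 with hGf
  -- summability of Gf
  have hsum : Summable Gf := by
    set s := Real.sqrt ‖z‖ with hs
    have hs0 : 0 ≤ s := Real.sqrt_nonneg _
    have hss : s * s = ‖z‖ := Real.mul_self_sqrt (norm_nonneg z)
    have hs1 : s < 1 := by nlinarith
    have hgeo : Summable (fun n : ℕ => s ^ n) := summable_geometric_of_lt_one hs0 hs1
    have hprod : Summable (fun p : ℕ × ℕ => s ^ p.1 * s ^ p.2) :=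
      hgeo.mul_of_nonneg hgeo (fun n => pow_nonneg hs0 n) (fun n => pow_nonneg hs0 n)
    refine Summable.of_norm_bounded hprod ?_
    rintro ⟨b, a⟩
    simp only [hGf]
    split_ifs with h
    · obtain ⟨ha1, hab⟩ := h
      have hb1 : (1:ℝ) ≤ (b:ℝ) := by exact_mod_cast le_trans ha1 hab
      have h1 : ‖y ^ a * z ^ b / ((b:ℕ) : ℂ)‖ = ‖y‖ ^ a * ‖z‖ ^ b / (b:ℝ) := by
        simp [norm_div, norm_mul, norm_pow]
      rw [h1]
      have hya : ‖y‖ ^ a ≤ 1 := pow_le_one₀ (norm_nonneg y) hy.le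
      have h2 : ‖y‖ ^ a * ‖z‖ ^ b / (b:ℝ) ≤ ‖z‖ ^ b := by
        have hd : ‖y‖ ^ a * ‖z‖ ^ b / (b:ℝ) ≤ ‖y‖ ^ a * ‖z‖ ^ b :=
          div_le_self (by positivity) hb1
        have hm : ‖y‖ ^ a * ‖z‖ ^ b ≤ 1 * ‖z‖ ^ b :=
          mul_le_mul_of_nonneg_right hya (by positivity)
        nlinarith
      refine h2.trans ?_
      have hzz : ‖z‖ ^ b = s ^ b * s ^ b := by rw [← mul_pow, hss]
      rw [hzz]
      exact mul_le_mul_of_nonneg_left (pow_le_pow_of_le_one hs0 hs1.le hab) (pow_nonneg hs0 b)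
    · simp only [norm_zero]
      positivity
  -- fiberwise sums
  have hfib : ∀ b : ℕ, HasSum (fun a => Gf (b, a))
      (y / (1 - y) * (z ^ b / (b:ℂ) - (y * z) ^ b / (b:ℂ))) := by
    intro b
    have hfin : ∀ a ∉ Finset.range (b + 1), Gf (b, a) = 0 := by
      intro a ha
      simp only [Finset.mem_range, not_lt] at ha
      simp only [hGf]
      rw [if_neg]
      rintro ⟨h1, h2⟩
      omega
    have h0 := hasSum_sum_of_ne_finset_zero (L := SummationFilter.unconditional ℕ) hfin
    have hfilter : (Finset.range (b+1)).filter (fun a => 1 ≤ a ∧ a ≤ b) = Finset.Ico 1 (b+1) := by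
      ext a
      simp only [Finset.mem_filter, Finset.mem_range, Finset.mem_Ico]
      omega
    have heq : (∑ a ∈ Finset.range (b+1), Gf (b, a))
        = y / (1 - y) * (z ^ b / (b:ℂ) - (y * z) ^ b / (b:ℂ)) := by
      have e1 : (∑ a ∈ Finset.range (b+1), Gf (b, a))
          = ∑ a ∈ Finset.Ico 1 (b+1), y ^ a * z ^ b / ((b:ℕ) : ℂ) := by
        rw [← hfilter, Finset.sum_filter]
      rw [e1]
      have e2 : ∀ a ∈ Finset.Ico 1 (b+1), y ^ a * z ^ b / ((b:ℕ):ℂ) = y ^ a * (z ^ b / (b:ℂ)) :=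
        fun a _ => mul_div_assoc _ _ _
      rw [Finset.sum_congr rfl e2, ← Finset.sum_mul,
        geom_sum_Ico hy1 (by omega : 1 ≤ b + 1)]
      rcases Nat.eq_zero_or_pos b with rfl | hb
      · simp
      · have hb0 : (b:ℂ) ≠ 0 := Nat.cast_ne_zero.mpr hb.ne'
        have hy1' : y - 1 ≠ 0 := sub_ne_zero.mpr hy1
        have hy1'' : (1:ℂ) - y ≠ 0 := sub_ne_zero.mpr (Ne.symm hy1)
        field_simp
        ring
    rw [heq] at h0
    exact h0
  -- outer sum
  have houter : HasSum (fun b : ℕ => y / (1 - y) * (z ^ b / (b:ℂ) - (y * z) ^ b / (b:ℂ))) S := by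
    have h1 := Complex.hasSum_taylorSeries_neg_log hz
    have h2 := Complex.hasSum_taylorSeries_neg_log hyz
    have h3 := (h1.sub h2).mul_left (y / (1 - y))
    have : y / (1 - y) * (-Complex.log (1 - z) - -Complex.log (1 - y * z)) = S := by
      rw [hS]; ring
    rw [this] at h3
    exact h3
  have hGfsum : HasSum Gf S := by
    have h0 := hsum.hasSum
    have h1 : HasSum (fun b : ℕ => y / (1 - y) * (z ^ b / (b:ℂ) - (y * z) ^ b / (b:ℂ)))
        (∑' p, Gf p) := h0.prod_fiberwise hfib
    rwa [h1.unique houter] at h0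
  exact (Equiv.prodComm ℕ ℕ).hasSum_iff.mpr hGfsum

set_option maxHeartbeats 1000000 in
private lemma hasSum_H (y z : ℂ) (hy : ‖y‖ < 1) (hz : ‖z‖ < 1) (hy1 : y ≠ 1) (hy2 : y ≠ -1) :
    HasSum (fun p : ℕ × ℕ => if 1 ≤ p.1 ∧ p.1 ≤ p.2
        then (-1 : ℂ) ^ (Nat.gcd p.1 p.2 + 1) * (y ^ p.1 * z ^ p.2) / (p.2 : ℂ) else 0)
      (y / (1 - y) * (Complex.log (1 - y * z) - Complex.log (1 - z))
        - y ^ 2 / (1 - y ^ 2) * (Complex.log (1 - y ^ 2 * z ^ 2) - Complex.log (1 - z ^ 2))) := by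
  classical
  have hy2n : ‖y ^ 2‖ < 1 := by
    rw [norm_pow]
    nlinarith [norm_nonneg y]
  have hz2n : ‖z ^ 2‖ < 1 := by
    rw [norm_pow]
    nlinarith [norm_nonneg z]
  have hy21 : y ^ 2 ≠ 1 := by
    intro h
    rcases mul_self_eq_one_iff.mp (show y * y = 1 by rw [← sq]; exact h) with h1 | h1
    exacts [hy1 h1, hy2 h1]
  have hG := hasSum_G y z hy hz hy1
  have hG2 := hasSum_G (y ^ 2) (z ^ 2) hy2n hz2n hy21
  set E : ℕ × ℕ → ℂ := fun p => if 2 ∣ p.1 ∧ 2 ∣ p.2 ∧ 1 ≤ p.1 ∧ p.1 ≤ p.2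
      then y ^ p.1 * z ^ p.2 / (p.2 : ℂ) else 0 with hE
  have hinj : Function.Injective (fun q : ℕ × ℕ => ((2 * q.1, 2 * q.2) : ℕ × ℕ)) := by
    intro a b h
    rw [Prod.ext_iff] at h ⊢
    simp only at h ⊢
    omega
  have hvanish : ∀ p ∉ Set.range (fun q : ℕ × ℕ => ((2 * q.1, 2 * q.2) : ℕ × ℕ)), E p = 0 := by
    rintro ⟨a, b⟩ hp
    simp only [hE]
    split_ifs with h
    · obtain ⟨⟨c, hc⟩, ⟨d, hd⟩, -⟩ := h
      exact absurd ⟨(c, d), by simp [hc, hd]⟩ hp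
    · rfl
  have hcomp : ∀ q : ℕ × ℕ,
      (if 1 ≤ q.1 ∧ q.1 ≤ q.2 then (y^2) ^ q.1 * (z^2) ^ q.2 / ((q.2:ℕ) : ℂ) else 0) / 2
      = E (2 * q.1, 2 * q.2) := by
    rintro ⟨a, b⟩
    simp only [hE]
    have hc : (2 ∣ 2*a ∧ 2 ∣ 2*b ∧ 1 ≤ 2*a ∧ 2*a ≤ 2*b) ↔ (1 ≤ a ∧ a ≤ b) := by omega
    rw [if_congr hc.symm rfl rfl]
    split_ifs with h
    · have hb0 : (b:ℂ) ≠ 0 := Nat.cast_ne_zero.mpr (by omega)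
      have hcast : (((2*b : ℕ)) : ℂ) = 2 * (b:ℂ) := by push_cast; ring
      rw [hcast, pow_mul, pow_mul, div_div]
      ring
    · simp
  have hEsum : HasSum E
      ((y ^ 2 / (1 - y ^ 2) * (Complex.log (1 - y ^ 2 * z ^ 2) - Complex.log (1 - z ^ 2))) / 2) := by
    refine (hinj.hasSum_iff hvanish).mp ?_
    have := hG2.div_const 2
    exact this.congr_fun (fun q => (hcomp q).symm)
  -- pointwise identity H = G - 2E
  have hpt : ∀ p : ℕ × ℕ,
      (if 1 ≤ p.1 ∧ p.1 ≤ p.2 then y ^ p.1 * z ^ p.2 / (p.2 : ℂ) else 0) - 2 * E p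
      = (if 1 ≤ p.1 ∧ p.1 ≤ p.2
          then (-1 : ℂ) ^ (Nat.gcd p.1 p.2 + 1) * (y ^ p.1 * z ^ p.2) / (p.2 : ℂ) else 0) := by
    rintro ⟨a, b⟩
    simp only [hE]
    by_cases h : 1 ≤ a ∧ a ≤ b
    · rw [if_pos h, if_pos h]
      by_cases h2 : 2 ∣ a ∧ 2 ∣ b
      · rw [if_pos ⟨h2.1, h2.2, h⟩]
        have hg : Odd (Nat.gcd a b + 1) := by
          have hd : 2 ∣ Nat.gcd a b := Nat.dvd_gcd h2.1 h2.2
          obtain ⟨c, hc⟩ := hd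
          exact ⟨c, by omega⟩
        rw [hg.neg_one_pow]
        ring
      · rw [if_neg (by tauto)]
        have hg : Even (Nat.gcd a b + 1) := by
          have hnd : ¬ 2 ∣ Nat.gcd a b := fun hd =>
            h2 ⟨dvd_trans hd (Nat.gcd_dvd_left a b), dvd_trans hd (Nat.gcd_dvd_right a b)⟩
          have : Nat.gcd a b % 2 = 1 := by omega
          exact ⟨(Nat.gcd a b) / 2 + 1, by omega⟩
        rw [hg.neg_one_pow]
        ring
    · rw [if_neg h, if_neg (by tauto), if_neg h]
      ring
  have hfinal := hG.sub (hEsum.mul_left 2)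
  have hval : y / (1 - y) * (Complex.log (1 - y * z) - Complex.log (1 - z))
      - 2 * ((y ^ 2 / (1 - y ^ 2) * (Complex.log (1 - y ^ 2 * z ^ 2) - Complex.log (1 - z ^ 2))) / 2)
      = y / (1 - y) * (Complex.log (1 - y * z) - Complex.log (1 - z))
      - y ^ 2 / (1 - y ^ 2) * (Complex.log (1 - y ^ 2 * z ^ 2) - Complex.log (1 - z ^ 2)) := by
    ring
  rw [hval] at hfinal
  exact hfinal.congr_fun (fun p => (hpt p).symm)

set_option maxHeartbeats 1600000 in
theorem stmt_3 (y z : ℂ) (hy : ‖y‖ < 1) (hz : ‖z‖ < 1) (hy1 : y ≠ 1) (hy2 : y ≠ -1) :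
    (∏' p : {p : ℕ × ℕ // 0 < p.1 ∧ 0 < p.2 ∧ p.1 ≤ p.2 ∧ Nat.gcd p.1 p.2 = 1},
      (1 + y ^ p.1.1 * z ^ p.1.2) ^ (1 / (p.1.2 : ℂ))) =
    ((1 - y * z) / (1 - z)) ^ (y / (1 - y)) *
      ((1 - z ^ 2) / (1 - y ^ 2 * z ^ 2)) ^ (y ^ 2 / (1 - y ^ 2)) := by
  classical
  set P := {p : ℕ × ℕ // 0 < p.1 ∧ 0 < p.2 ∧ p.1 ≤ p.2 ∧ Nat.gcd p.1 p.2 = 1} with hP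
  set Stot := y / (1 - y) * (Complex.log (1 - y * z) - Complex.log (1 - z))
      - y ^ 2 / (1 - y ^ 2) * (Complex.log (1 - y ^ 2 * z ^ 2) - Complex.log (1 - z ^ 2)) with hStot
  have hH := hasSum_H y z hy hz hy1 hy2
  set H : ℕ × ℕ → ℂ := fun p => if 1 ≤ p.1 ∧ p.1 ≤ p.2
      then (-1 : ℂ) ^ (Nat.gcd p.1 p.2 + 1) * (y ^ p.1 * z ^ p.2) / (p.2 : ℂ) else 0 with hHdef
  set e3 : P × ℕ → ℕ × ℕ := fun q => ((q.2 + 1) * q.1.1.1, (q.2 + 1) * q.1.1.2) with he3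
  have hinj3 : Function.Injective e3 := by
    rintro ⟨⟨⟨j, k⟩, hj, hk, hjk, hg⟩, n⟩ ⟨⟨⟨j', k'⟩, hj', hk', hjk', hg'⟩, n'⟩ h
    simp only [he3, Prod.mk.injEq] at h
    obtain ⟨h1, h2⟩ := h
    have ha := Nat.gcd_mul_left (n+1) j k
    have hb := Nat.gcd_mul_left (n'+1) j' k'
    rw [hg, mul_one] at ha
    rw [hg', mul_one] at hb
    rw [h1, h2] at ha
    have hn : n = n' := by omega
    subst hn
    have hj2 : j = j' := Nat.eq_of_mul_eq_mul_left (Nat.succ_pos n) h1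
    have hk2 : k = k' := Nat.eq_of_mul_eq_mul_left (Nat.succ_pos n) h2
    subst hj2; subst hk2
    rfl
  have hvan3 : ∀ p ∉ Set.range e3, H p = 0 := by
    rintro ⟨a, b⟩ hp
    simp only [hHdef]
    split_ifs with h
    · exfalso
      apply hp
      obtain ⟨ha, hab⟩ := h
      have hg0 : 0 < Nat.gcd a b := Nat.gcd_pos_of_pos_left b (by omega)
      refine ⟨⟨⟨⟨a / Nat.gcd a b, b / Nat.gcd a b⟩, ?_, ?_, ?_, ?_⟩, Nat.gcd a b - 1⟩, ?_⟩
      · exact Nat.div_pos (Nat.le_of_dvd (by omega) (Nat.gcd_dvd_left a b)) hg0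
      · exact Nat.div_pos (Nat.le_of_dvd (by omega) (Nat.gcd_dvd_right a b)) hg0
      · exact Nat.div_le_div_right hab
      · exact Nat.coprime_div_gcd_div_gcd hg0
      · simp only [he3]
        have h1 : Nat.gcd a b - 1 + 1 = Nat.gcd a b := by omega
        rw [Prod.ext_iff]
        constructor
        · simp only [h1]
          exact Nat.mul_div_cancel' (Nat.gcd_dvd_left a b)
        · simp only [h1]
          exact Nat.mul_div_cancel' (Nat.gcd_dvd_right a b)
    · rfl
  set F : P × ℕ → ℂ := fun q => (1 / ((q.1.1.2 : ℕ) : ℂ)) *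
      ((-1 : ℂ) ^ (q.2 + 1 + 1) * (y ^ q.1.1.1 * z ^ q.1.1.2) ^ (q.2 + 1)
        / (((q.2 + 1 : ℕ)) : ℂ)) with hF
  have hpt3 : ∀ q : P × ℕ, H (e3 q) = F q := by
    rintro ⟨⟨⟨j, k⟩, hj, hk, hjk, hg⟩, n⟩
    simp only [hHdef, hF, he3]
    have hcond : 1 ≤ (n+1) * j ∧ (n+1) * j ≤ (n+1) * k :=
      ⟨Nat.mul_pos (Nat.succ_pos n) hj, Nat.mul_le_mul_left _ hjk⟩
    rw [if_pos hcond]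
    have hgcd : Nat.gcd ((n+1) * j) ((n+1) * k) = n + 1 := by
      rw [Nat.gcd_mul_left, hg, mul_one]
    rw [hgcd]
    have h1 : (y ^ j * z ^ k) ^ (n+1) = y ^ ((n+1) * j) * z ^ ((n+1) * k) := by
      rw [mul_pow, ← pow_mul, ← pow_mul, Nat.mul_comm j, Nat.mul_comm k]
    rw [h1]
    push_cast
    rw [mul_comm (1 / (k : ℂ)), div_mul_div_comm, mul_one]
  have hFsum : HasSum F Stot := ((hinj3.hasSum_iff hvan3).mpr hH).congr_fun
    (fun q => (hpt3 q).symm)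
  have hfib3 : ∀ p : P, HasSum (fun n => F (p, n))
      ((1 / ((p.1.2 : ℕ) : ℂ)) * Complex.log (1 + y ^ p.1.1 * z ^ p.1.2)) := by
    rintro ⟨⟨j, k⟩, hj, hk, hjk, hg⟩
    have hw : ‖y ^ j * z ^ k‖ < 1 := norm_term_lt_one hy hz hj hk
    have ht := Complex.hasSum_taylorSeries_log hw
    have ht0 : HasSum (fun n : ℕ =>
        (-1 : ℂ) ^ (n + 1 + 1) * (y ^ j * z ^ k) ^ (n + 1) / (((n + 1 : ℕ)) : ℂ))
        (Complex.log (1 + y ^ j * z ^ k)) := by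
      have h0 : HasSum (fun n : ℕ => (-1 : ℂ) ^ (n + 1) * (y ^ j * z ^ k) ^ n / (n : ℂ))
          (Complex.log (1 + y ^ j * z ^ k)
            + ∑ i ∈ Finset.range 1, (-1 : ℂ) ^ (i + 1) * (y ^ j * z ^ k) ^ i / (i : ℂ)) := by
        simpa using ht
      exact (hasSum_nat_add_iff 1).mpr h0
    exact ht0.mul_left _
  have hsum_final : HasSum (fun p : P =>
      (1 / ((p.1.2 : ℕ) : ℂ)) * Complex.log (1 + y ^ p.1.1 * z ^ p.1.2)) Stot :=
    hFsum.prod_fiberwise hfib3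
  -- turn the sum into a product
  have hne : ∀ p : P, (1 + y ^ p.1.1 * z ^ p.1.2) ≠ 0 := by
    rintro ⟨⟨j, k⟩, hj, hk, hjk, hg⟩ h0
    have hw : ‖y ^ j * z ^ k‖ < 1 := norm_term_lt_one hy hz hj hk
    have hw1 : y ^ j * z ^ k = -1 := by linear_combination h0
    rw [hw1] at hw
    simp at hw
  have hprod : HasProd (fun p : P => (1 + y ^ p.1.1 * z ^ p.1.2) ^ (1 / (p.1.2 : ℂ)))
      (Complex.exp Stot) := by
    have h := hsum_final.cexp
    refine h.congr_fun fun p => ?_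
    simp only [Function.comp]
    rw [Complex.cpow_def_of_ne_zero (hne p), mul_comm]
  rw [hprod.tprod_eq]
  -- evaluate the RHS
  have hyz : ‖y * z‖ < 1 := by
    have h := norm_mul y z
    nlinarith [norm_nonneg y, norm_nonneg z]
  have hz2n : ‖z ^ 2‖ < 1 := by
    rw [norm_pow]; nlinarith [norm_nonneg z]
  have hy2z2 : ‖y ^ 2 * z ^ 2‖ < 1 := by
    have h : y ^ 2 * z ^ 2 = (y * z) ^ 2 := by ring
    rw [h, norm_pow]
    nlinarith [norm_nonneg (y * z)]
  have hre1 : 0 < (1 - y * z).re := re_pos_of_norm_lt_one hyz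
  have hre2 : 0 < (1 - z).re := re_pos_of_norm_lt_one hz
  have hre3 : 0 < (1 - z ^ 2).re := re_pos_of_norm_lt_one hz2n
  have hre4 : 0 < (1 - y ^ 2 * z ^ 2).re := re_pos_of_norm_lt_one hy2z2
  have hne1 : (1 - y * z) ≠ 0 := one_sub_ne_zero_of_norm_lt_one hyz
  have hne2 : (1 - z) ≠ 0 := one_sub_ne_zero_of_norm_lt_one hz
  have hne3 : (1 - z ^ 2) ≠ 0 := one_sub_ne_zero_of_norm_lt_one hz2n
  have hne4 : (1 - y ^ 2 * z ^ 2) ≠ 0 := one_sub_ne_zero_of_norm_lt_one hy2z2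
  have hA : ((1 - y * z) / (1 - z)) ^ (y / (1 - y))
      = Complex.exp (y / (1 - y) * (Complex.log (1 - y * z) - Complex.log (1 - z))) := by
    rw [Complex.cpow_def_of_ne_zero (div_ne_zero hne1 hne2), log_div_of_re_pos hre1 hre2,
      mul_comm]
  have hB : ((1 - z ^ 2) / (1 - y ^ 2 * z ^ 2)) ^ (y ^ 2 / (1 - y ^ 2))
      = Complex.exp (-(y ^ 2 / (1 - y ^ 2)
          * (Complex.log (1 - y ^ 2 * z ^ 2) - Complex.log (1 - z ^ 2)))) := by
    rw [Complex.cpow_def_of_ne_zero (div_ne_zero hne3 hne4), log_div_of_re_pos hre3 hre4]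
    congr 1
    ring
  rw [hA, hB, ← Complex.exp_add, hStot]
  rw [sub_eq_add_neg]
end

section
/- Let y, z ∈ ℂ with |y| < 1 and |z| < 1. Then the infinite product over all pairs of positive integers (j,k) with j ≤ k and gcd(j,k) = 1 of (1/(1 − y^j z^k))^(1/j) equals (1/(1 − yz))^(1/(1 − z)). -/
open Complex

private lemma one_sub_ne_zero {w : ℂ} (hw : ‖w‖ < 1) : (1 : ℂ) - w ≠ 0 := by
  intro h
  have := re_pos_of_norm_lt_one hw
  rw [h] at this; simp at this

private lemma arg_ne_pi {w : ℂ} (hw : ‖w‖ < 1) : (1 - w).arg ≠ Real.pi := by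
  intro h
  rw [Complex.arg_eq_pi_iff] at h
  have := re_pos_of_norm_lt_one hw
  linarith [h.1]

/-- log of 1/(1-w) -/
private lemma log_one_div {w : ℂ} (hw : ‖w‖ < 1) :
    Complex.log (1 / (1 - w)) = -Complex.log (1 - w) := by
  rw [one_div, Complex.log_inv _ (arg_ne_pi hw)]

/-- Taylor series of -log over ℕ+ -/
private lemma hasSum_pnat_log {w : ℂ} (hw : ‖w‖ < 1) :
    HasSum (fun m : ℕ+ => w ^ (m : ℕ) / (m : ℕ)) (-Complex.log (1 - w)) := by
  have h := Complex.hasSum_taylorSeries_neg_log hw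
  have hinj : Function.Injective (fun m : ℕ+ => (m : ℕ)) := fun a b h => PNat.coe_injective h
  rw [← Function.Injective.hasSum_iff hinj (f := fun n : ℕ => w ^ n / n)] at h
  · exact h
  · intro n hn
    have : n = 0 := by
      by_contra h0
      exact hn ⟨⟨n, Nat.pos_of_ne_zero h0⟩, rfl⟩
    simp [this]

private abbrev Aset : Type := {q : ℕ × ℕ // 0 < q.1 ∧ q.1 ≤ q.2}

private abbrev Pset : Type := {p : ℕ × ℕ // 0 < p.1 ∧ 0 < p.2 ∧ p.1 ≤ p.2 ∧ Nat.gcd p.1 p.2 = 1}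

/-- (a, d) ↦ (a, a + d) -/
private def E2 : ℕ+ × ℕ ≃ Aset where
  toFun x := ⟨(x.1, x.1 + x.2), x.1.pos, Nat.le_add_right _ _⟩
  invFun q := (⟨q.1.1, q.2.1⟩, q.1.2 - q.1.1)
  left_inv x := by
    ext
    · rfl
    · simp
  right_inv q := by
    apply Subtype.ext
    ext
    · rfl
    · exact Nat.add_sub_cancel' q.2.2

/-- ((j,k),m) ↦ (j m, k m) -/
private def E1 : Pset × ℕ+ ≃ Aset where
  toFun x := ⟨(x.1.1.1 * x.2, x.1.1.2 * x.2), Nat.mul_pos x.1.2.1 x.2.pos,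
    Nat.mul_le_mul_right _ x.1.2.2.2.1⟩
  invFun q :=
    (⟨(q.1.1 / Nat.gcd q.1.1 q.1.2, q.1.2 / Nat.gcd q.1.1 q.1.2),
      Nat.div_pos (Nat.le_of_dvd q.2.1 (Nat.gcd_dvd_left _ _))
        (Nat.gcd_pos_of_pos_left _ q.2.1),
      Nat.div_pos (Nat.le_of_dvd (lt_of_lt_of_le q.2.1 q.2.2) (Nat.gcd_dvd_right _ _))
        (Nat.gcd_pos_of_pos_left _ q.2.1),
      Nat.div_le_div_right q.2.2,
      Nat.coprime_div_gcd_div_gcd (Nat.gcd_pos_of_pos_left _ q.2.1)⟩,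
     ⟨Nat.gcd q.1.1 q.1.2, Nat.gcd_pos_of_pos_left _ q.2.1⟩)
  left_inv x := by
    obtain ⟨⟨⟨j, k⟩, hj, hk, hjk, hco⟩, m⟩ := x
    have hg : Nat.gcd (j * m) (k * m) = m := by
      rw [Nat.gcd_mul_right, hco, one_mul]
    refine Prod.ext (Subtype.ext ?_) (Subtype.ext ?_)
    · simp only [hg]
      exact Prod.ext (Nat.mul_div_cancel _ m.pos) (Nat.mul_div_cancel _ m.pos)
    · simp only [hg]
      rfl
  right_inv q := by
    exact Subtype.ext (Prod.ext (Nat.div_mul_cancel (Nat.gcd_dvd_left _ _))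
      (Nat.div_mul_cancel (Nat.gcd_dvd_right _ _)))

theorem stmt_4 (y z : ℂ) (hy : ‖y‖ < 1) (hz : ‖z‖ < 1) :
    (∏' p : {p : ℕ × ℕ // 0 < p.1 ∧ 0 < p.2 ∧ p.1 ≤ p.2 ∧ Nat.gcd p.1 p.2 = 1},
      (1 / (1 - y ^ p.1.1 * z ^ p.1.2)) ^ (1 / (p.1.1 : ℂ))) =
    (1 / (1 - y * z)) ^ (1 / (1 - z)) := by
  have hyz : ‖y * z‖ < 1 := by
    rw [norm_mul]
    nlinarith [norm_nonneg y, norm_nonneg z]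
  set F : Aset → ℂ := fun q => y ^ q.1.1 * z ^ q.1.2 / (q.1.1 : ℂ) with hF
  have hsum : Summable F := by
    have h1 : Summable (fun q : ℕ × ℕ => ‖y‖ ^ q.1 * ‖z‖ ^ q.2) :=
      (summable_geometric_of_lt_one (norm_nonneg y) hy).mul_of_nonneg
        (summable_geometric_of_lt_one (norm_nonneg z) hz)
        (fun n => pow_nonneg (norm_nonneg y) n) (fun n => pow_nonneg (norm_nonneg z) n)
    have h2 : Summable (fun q : Aset => ‖y‖ ^ q.1.1 * ‖z‖ ^ q.1.2) :=
      h1.subtype _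
    refine h2.of_norm_bounded (fun q => ?_)
    have h1a : (1 : ℝ) ≤ ‖((q.1.1 : ℕ) : ℂ)‖ := by
      rw [Complex.norm_natCast]
      exact_mod_cast q.2.1
    calc ‖F q‖ = ‖y‖ ^ q.1.1 * ‖z‖ ^ q.1.2 / ‖((q.1.1 : ℕ) : ℂ)‖ := by
          rw [hF]; simp [norm_div, norm_mul, norm_pow]
      _ ≤ ‖y‖ ^ q.1.1 * ‖z‖ ^ q.1.2 / 1 := by
          apply div_le_div_of_nonneg_left _ one_pos h1a
          positivity
      _ = ‖y‖ ^ q.1.1 * ‖z‖ ^ q.1.2 := div_one _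
  set S := ∑' q, F q with hS
  have hFS : HasSum F S := hsum.hasSum
  -- compute S via E2
  have h2 : HasSum (F ∘ E2) S := (Equiv.hasSum_iff E2).2 hFS
  have hinner2 : ∀ a : ℕ+, HasSum (fun d : ℕ => (F ∘ E2) (a, d))
      ((y * z) ^ (a : ℕ) / ((a : ℕ) : ℂ) * (1 - z)⁻¹) := by
    intro a
    have heq : (fun d : ℕ => (F ∘ E2) (a, d))
        = fun d => (y * z) ^ (a : ℕ) / ((a : ℕ) : ℂ) * z ^ d := by
      funext d
      show y ^ (a : ℕ) * z ^ ((a : ℕ) + d) / (((a : ℕ) : ℕ) : ℂ) = _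
      rw [pow_add, mul_pow]
      ring
    rw [heq]
    exact (hasSum_geometric_of_norm_lt_one hz).mul_left _
  have hSval : HasSum (fun a : ℕ+ => (y * z) ^ (a : ℕ) / ((a : ℕ) : ℂ) * (1 - z)⁻¹) S :=
    h2.prod_fiberwise hinner2
  have hSval' : HasSum (fun a : ℕ+ => (y * z) ^ (a : ℕ) / ((a : ℕ) : ℂ) * (1 - z)⁻¹)
      (-Complex.log (1 - y * z) * (1 - z)⁻¹) := (hasSum_pnat_log hyz).mul_right _
  have hSeq : S = -Complex.log (1 - y * z) * (1 - z)⁻¹ := hSval.unique hSval'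
  -- via E1
  have h1 : HasSum (F ∘ E1) S := (Equiv.hasSum_iff E1).2 hFS
  have hnorm : ∀ p : Pset, ‖y ^ p.1.1 * z ^ p.1.2‖ < 1 := by
    intro p
    rw [norm_mul, norm_pow, norm_pow]
    have hy1 : ‖y‖ ^ p.1.1 ≤ ‖y‖ := by
      calc ‖y‖ ^ p.1.1 ≤ ‖y‖ ^ 1 := pow_le_pow_of_le_one (norm_nonneg y) hy.le p.2.1
        _ = ‖y‖ := pow_one _
    have hz1 : ‖z‖ ^ p.1.2 ≤ ‖z‖ := by
      calc ‖z‖ ^ p.1.2 ≤ ‖z‖ ^ 1 := pow_le_pow_of_le_one (norm_nonneg z) hz.le p.2.2.1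
        _ = ‖z‖ := pow_one _
    nlinarith [pow_nonneg (norm_nonneg y) p.1.1, pow_nonneg (norm_nonneg z) p.1.2,
      norm_nonneg y, norm_nonneg z]
  have hinner1 : ∀ p : Pset, HasSum (fun m : ℕ+ => (F ∘ E1) (p, m))
      (-Complex.log (1 - y ^ p.1.1 * z ^ p.1.2) * (1 / (p.1.1 : ℂ))) := by
    intro p
    have hj : ((p.1.1 : ℕ) : ℂ) ≠ 0 := Nat.cast_ne_zero.mpr p.2.1.ne'
    have heq : (fun m : ℕ+ => (F ∘ E1) (p, m))
        = fun m : ℕ+ => (y ^ p.1.1 * z ^ p.1.2) ^ (m : ℕ) / ((m : ℕ) : ℂ) * (1 / (p.1.1 : ℂ)) := by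
      funext m
      show y ^ (p.1.1 * (m : ℕ)) * z ^ (p.1.2 * (m : ℕ)) / ((p.1.1 * (m : ℕ) : ℕ) : ℂ) = _
      have hm : (((m : ℕ)) : ℂ) ≠ 0 := Nat.cast_ne_zero.mpr m.pos.ne'
      push_cast
      rw [pow_mul, pow_mul, mul_pow]
      ring
    rw [heq]
    exact (hasSum_pnat_log (hnorm p)).mul_right _
  have hPsum : HasSum
      (fun p : Pset => -Complex.log (1 - y ^ p.1.1 * z ^ p.1.2) * (1 / (p.1.1 : ℂ))) S :=
    h1.prod_fiberwise hinner1
  have hprod := hPsum.cexp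
  have hfac : (Complex.exp ∘ fun p : Pset =>
        -Complex.log (1 - y ^ p.1.1 * z ^ p.1.2) * (1 / (p.1.1 : ℂ)))
      = fun p : Pset => (1 / (1 - y ^ p.1.1 * z ^ p.1.2)) ^ (1 / (p.1.1 : ℂ)) := by
    funext p
    rw [Function.comp_apply,
      Complex.cpow_def_of_ne_zero (one_div_ne_zero (one_sub_ne_zero (hnorm p))),
      log_one_div (hnorm p)]
  rw [hfac] at hprod
  rw [hprod.tprod_eq,
    Complex.cpow_def_of_ne_zero (one_div_ne_zero (one_sub_ne_zero hyz)),
    log_one_div hyz, hSeq, one_div]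
end

section
/- Let a, b, c ∈ ℂ with a + b + c = 1, and let x, y, z ∈ ℂ with |x| < 1, |y| < 1, |z| < 1. Then the infinite product over all triples of positive integers (l,m,n) with l ≤ n, m ≤ n and gcd(l,m,n) = 1 of (1/(1 − x^l y^m z^n))^(1/(l^a m^b n^c)) equals exp( Σ_{n=1}^∞ (Σ_{l=1}^n x^l / l^a) · (Σ_{m=1}^n y^m / m^b) · z^n / n^c ). -/
open Complex Finset

/-- The general summand of the VPV triple sum. -/
noncomputable def vpvG (a b c x y z : ℂ) (q : ℕ × ℕ × ℕ) : ℂ :=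
  x ^ q.1 * y ^ q.2.1 * z ^ q.2.2 / ((q.1 : ℂ) ^ a * (q.2.1 : ℂ) ^ b * (q.2.2 : ℂ) ^ c)

/-- The pyramid index set. -/
abbrev vpvPyr : Type :=
  {q : ℕ × ℕ × ℕ // 0 < q.1 ∧ 0 < q.2.1 ∧ 0 < q.2.2 ∧ q.1 ≤ q.2.2 ∧ q.2.1 ≤ q.2.2}

/-- The visible points in the pyramid. -/
abbrev vpvVis : Type :=
  {p : ℕ × ℕ × ℕ // 0 < p.1 ∧ 0 < p.2.1 ∧ 0 < p.2.2 ∧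
    p.1 ≤ p.2.2 ∧ p.2.1 ≤ p.2.2 ∧ Nat.gcd p.1 (Nat.gcd p.2.1 p.2.2) = 1}

/-- The sigma-type parametrization of the pyramid by the last coordinate. -/
abbrev vpvSig : Type := Σ n : ℕ+, (↥(Finset.Icc 1 (n : ℕ)) × ↥(Finset.Icc 1 (n : ℕ)))

/-- Pyramid as a sigma type. -/
def vpvPyrEquiv : vpvPyr ≃ vpvSig where
  toFun q := ⟨⟨q.1.2.2, q.2.2.2.1⟩,
    ⟨⟨q.1.1, Finset.mem_Icc.mpr ⟨q.2.1, q.2.2.2.2.1⟩⟩,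
     ⟨q.1.2.1, Finset.mem_Icc.mpr ⟨q.2.2.1, q.2.2.2.2.2⟩⟩⟩⟩
  invFun s := ⟨(s.2.1, s.2.2, s.1),
    (Finset.mem_Icc.mp s.2.1.2).1, (Finset.mem_Icc.mp s.2.2.2).1, s.1.2,
    (Finset.mem_Icc.mp s.2.1.2).2, (Finset.mem_Icc.mp s.2.2.2).2⟩
  left_inv _ := rfl
  right_inv _ := rfl

/-- Scaling visible points enumerates the pyramid. -/
noncomputable def vpvVisEquiv : vpvVis × ℕ+ ≃ vpvPyr :=
  Equiv.ofBijective
    (fun pk => ⟨((pk.2 : ℕ) * pk.1.1.1, (pk.2 : ℕ) * pk.1.1.2.1, (pk.2 : ℕ) * pk.1.1.2.2),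
      Nat.mul_pos pk.2.pos pk.1.2.1, Nat.mul_pos pk.2.pos pk.1.2.2.1,
      Nat.mul_pos pk.2.pos pk.1.2.2.2.1,
      Nat.mul_le_mul_left _ pk.1.2.2.2.2.1, Nat.mul_le_mul_left _ pk.1.2.2.2.2.2.1⟩)
    (by
      constructor
      · rintro ⟨⟨⟨l, m, n⟩, hl, hm, hn, hln, hmn, hg⟩, k⟩
          ⟨⟨⟨l', m', n'⟩, hl', hm', hn', hln', hmn', hg'⟩, k'⟩ h
        simp only [Subtype.mk.injEq, Prod.mk.injEq] at h
        obtain ⟨h1, h2, h3⟩ := h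
        have hk : (k : ℕ) = (k' : ℕ) := by
          have e1 : Nat.gcd ((k : ℕ) * l) (Nat.gcd ((k : ℕ) * m) ((k : ℕ) * n)) = k := by
            rw [Nat.gcd_mul_left, Nat.gcd_mul_left, hg, mul_one]
          have e2 : Nat.gcd ((k' : ℕ) * l') (Nat.gcd ((k' : ℕ) * m') ((k' : ℕ) * n')) = k' := by
            rw [Nat.gcd_mul_left, Nat.gcd_mul_left, hg', mul_one]
          rw [← e1, ← e2, h1, h2, h3]
        have hkpos : 0 < (k : ℕ) := k.pos
        rw [hk] at h1 h2 h3
        have hll : l = l' := Nat.eq_of_mul_eq_mul_left (hk ▸ hkpos) h1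
        have hmm : m = m' := Nat.eq_of_mul_eq_mul_left (hk ▸ hkpos) h2
        have hnn : n = n' := Nat.eq_of_mul_eq_mul_left (hk ▸ hkpos) h3
        subst hll; subst hmm; subst hnn
        refine Prod.ext (Subtype.ext rfl) (PNat.coe_injective hk)
      · rintro ⟨⟨L, M, N⟩, hL, hM, hN, hLN, hMN⟩
        set d := Nat.gcd L (Nat.gcd M N) with hd
        have hdpos : 0 < d := Nat.gcd_pos_of_pos_right _ (Nat.gcd_pos_of_pos_right _ hN)
        have hdL : d ∣ L := Nat.gcd_dvd_left _ _
        have hdM : d ∣ M := (Nat.gcd_dvd_right _ _).trans (Nat.gcd_dvd_left _ _)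
        have hdN : d ∣ N := (Nat.gcd_dvd_right _ _).trans (Nat.gcd_dvd_right _ _)
        have hg1 : d * Nat.gcd (L / d) (Nat.gcd (M / d) (N / d)) = d := by
          rw [← Nat.gcd_mul_left, ← Nat.gcd_mul_left, Nat.mul_div_cancel' hdL,
            Nat.mul_div_cancel' hdM, Nat.mul_div_cancel' hdN]
        have hg : Nat.gcd (L / d) (Nat.gcd (M / d) (N / d)) = 1 :=
          Nat.eq_of_mul_eq_mul_left hdpos (by rw [hg1, mul_one])
        refine ⟨⟨⟨(L / d, M / d, N / d),
          Nat.div_pos (Nat.le_of_dvd hL hdL) hdpos,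
          Nat.div_pos (Nat.le_of_dvd hM hdM) hdpos,
          Nat.div_pos (Nat.le_of_dvd hN hdN) hdpos,
          Nat.div_le_div_right hLN, Nat.div_le_div_right hMN, hg⟩, ⟨d, hdpos⟩⟩, ?_⟩
        exact Subtype.ext (by
          simp only [PNat.mk_ofNat, PNat.mk_coe]
          exact Prod.ext (Nat.mul_div_cancel' hdL)
            (Prod.ext (Nat.mul_div_cancel' hdM) (Nat.mul_div_cancel' hdN))))

lemma vpv_w_lt {x y z : ℂ} (hx : ‖x‖ < 1) (hy : ‖y‖ < 1) (hz : ‖z‖ < 1)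
    {l m n : ℕ} (hn : 0 < n) : ‖x ^ l * y ^ m * z ^ n‖ < 1 := by
  rw [norm_mul, norm_mul, norm_pow, norm_pow, norm_pow]
  calc ‖x‖ ^ l * ‖y‖ ^ m * ‖z‖ ^ n ≤ 1 * 1 * ‖z‖ ^ n := by
        gcongr
        · exact pow_le_one₀ (norm_nonneg _) hx.le
        · exact pow_le_one₀ (norm_nonneg _) hy.le
    _ = ‖z‖ ^ n := by ring
    _ < 1 := pow_lt_one₀ (norm_nonneg _) hz hn.ne'

lemma vpv_rpow_bound {r : ℝ} (hr0 : 0 ≤ r) (hr1 : r ≤ 1) {L N : ℕ}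
    (hL : 0 < L) (hLN : L ≤ N) (t : ℝ) : r ^ L / (L : ℝ) ^ t ≤ (N : ℝ) ^ |t| := by
  have hL1 : (1 : ℝ) ≤ (L : ℝ) := by exact_mod_cast hL
  have hLN' : (L : ℝ) ≤ (N : ℝ) := by exact_mod_cast hLN
  have hpos : (0 : ℝ) < (L : ℝ) ^ t := Real.rpow_pos_of_pos (by linarith) t
  calc r ^ L / (L : ℝ) ^ t ≤ 1 / (L : ℝ) ^ t := by
        gcongr
        exact pow_le_one₀ hr0 hr1
    _ = (L : ℝ) ^ (-t) := by rw [Real.rpow_neg (by linarith), one_div]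
    _ ≤ (L : ℝ) ^ |t| := Real.rpow_le_rpow_of_exponent_le hL1 (neg_le_abs t)
    _ ≤ (N : ℝ) ^ |t| := Real.rpow_le_rpow (by linarith) hLN' (abs_nonneg t)

lemma vpv_norm_bound {a b c x y z : ℂ} (hx : ‖x‖ ≤ 1) (hy : ‖y‖ ≤ 1)
    {L M N : ℕ} (hL : 0 < L) (hM : 0 < M) (hN : 0 < N) (hLN : L ≤ N) (hMN : M ≤ N) :
    ‖vpvG a b c x y z (L, M, N)‖ ≤
      (N : ℝ) ^ (|a.re| + |b.re| + |c.re|) * ‖z‖ ^ N := by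
  have hnorm : ‖vpvG a b c x y z (L, M, N)‖ =
      ‖x‖ ^ L * ‖y‖ ^ M * ‖z‖ ^ N / ((L : ℝ) ^ a.re * (M : ℝ) ^ b.re * (N : ℝ) ^ c.re) := by
    rw [vpvG, norm_div, norm_mul, norm_mul, norm_pow, norm_pow, norm_pow,
      norm_mul, norm_mul, Complex.norm_natCast_cpow_of_pos hL,
      Complex.norm_natCast_cpow_of_pos hM, Complex.norm_natCast_cpow_of_pos hN]
  rw [hnorm]
  have h1 : ‖x‖ ^ L / (L : ℝ) ^ a.re ≤ (N : ℝ) ^ |a.re| :=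
    vpv_rpow_bound (norm_nonneg x) hx hL hLN a.re
  have h2 : ‖y‖ ^ M / (M : ℝ) ^ b.re ≤ (N : ℝ) ^ |b.re| :=
    vpv_rpow_bound (norm_nonneg y) hy hM hMN b.re
  have h3 : (1 : ℝ) / (N : ℝ) ^ c.re ≤ (N : ℝ) ^ |c.re| := by
    simpa using vpv_rpow_bound zero_le_one le_rfl hN (le_refl N) c.re
  have hNpos : (0 : ℝ) < (N : ℝ) := by exact_mod_cast hN
  have key : ‖x‖ ^ L * ‖y‖ ^ M * ‖z‖ ^ N / ((L : ℝ) ^ a.re * (M : ℝ) ^ b.re * (N : ℝ) ^ c.re)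
      = (‖x‖ ^ L / (L : ℝ) ^ a.re) * (‖y‖ ^ M / (M : ℝ) ^ b.re) *
        ((1 : ℝ) / (N : ℝ) ^ c.re) * ‖z‖ ^ N := by ring
  rw [key]
  have e : (N : ℝ) ^ (|a.re| + |b.re| + |c.re|) =
      (N : ℝ) ^ |a.re| * (N : ℝ) ^ |b.re| * (N : ℝ) ^ |c.re| := by
    rw [Real.rpow_add hNpos, Real.rpow_add hNpos]
  rw [e]
  have hd1 : (0:ℝ) ≤ ‖x‖ ^ L / (L : ℝ) ^ a.re := by positivity
  have hd2 : (0:ℝ) ≤ ‖y‖ ^ M / (M : ℝ) ^ b.re := by positivity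
  have hd3 : (0:ℝ) ≤ (1:ℝ) / (N : ℝ) ^ c.re := by positivity
  gcongr

lemma vpv_summable_sigma {a b c x y z : ℂ} (hx : ‖x‖ < 1) (hy : ‖y‖ < 1) (hz : ‖z‖ < 1) :
    Summable (fun s : vpvSig => vpvG a b c x y z ((s.2.1 : ℕ), (s.2.2 : ℕ), (s.1 : ℕ))) := by
  set K : ℝ := |a.re| + |b.re| + |c.re| with hK
  set k0 : ℕ := ⌈K⌉₊ + 2 with hk0
  apply Summable.of_norm
  rw [summable_sigma_of_nonneg (fun _ => norm_nonneg _)]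
  constructor
  · intro n; exact Summable.of_finite
  · -- bound the fibre sums
    have hmaj : Summable (fun n : ℕ+ => ((n : ℕ) : ℝ) ^ k0 * ‖z‖ ^ (n : ℕ)) := by
      have h := summable_pow_mul_geometric_of_norm_lt_one (R := ℝ) k0
        (r := ‖z‖) (by rwa [norm_norm])
      exact h.comp_injective PNat.coe_injective
    apply Summable.of_nonneg_of_le (fun n => tsum_nonneg fun _ => norm_nonneg _) _ hmaj
    intro n
    have hfin : ∑' (p : ↥(Finset.Icc 1 (n : ℕ)) × ↥(Finset.Icc 1 (n : ℕ))),
        ‖vpvG a b c x y z ((p.1 : ℕ), (p.2 : ℕ), (n : ℕ))‖ =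
        ∑ p : ↥(Finset.Icc 1 (n : ℕ)) × ↥(Finset.Icc 1 (n : ℕ)),
        ‖vpvG a b c x y z ((p.1 : ℕ), (p.2 : ℕ), (n : ℕ))‖ := tsum_fintype _
    rw [hfin]
    have hcard : (Finset.univ : Finset (↥(Finset.Icc 1 (n : ℕ)) × ↥(Finset.Icc 1 (n : ℕ)))).card
        = (n : ℕ) * (n : ℕ) := by
      simp [Finset.card_univ, Nat.card_Icc]
    have hbound : ∀ p ∈ (Finset.univ : Finset (↥(Finset.Icc 1 (n : ℕ)) × ↥(Finset.Icc 1 (n : ℕ)))),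
        ‖vpvG a b c x y z ((p.1 : ℕ), (p.2 : ℕ), (n : ℕ))‖ ≤
          ((n : ℕ) : ℝ) ^ K * ‖z‖ ^ (n : ℕ) := by
      intro p _
      obtain ⟨hl1, hl2⟩ := Finset.mem_Icc.mp p.1.2
      obtain ⟨hm1, hm2⟩ := Finset.mem_Icc.mp p.2.2
      exact vpv_norm_bound hx.le hy.le hl1 hm1 n.pos hl2 hm2
    calc ∑ p : ↥(Finset.Icc 1 (n : ℕ)) × ↥(Finset.Icc 1 (n : ℕ)),
          ‖vpvG a b c x y z ((p.1 : ℕ), (p.2 : ℕ), (n : ℕ))‖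
        ≤ (Finset.univ : Finset (↥(Finset.Icc 1 (n : ℕ)) × ↥(Finset.Icc 1 (n : ℕ)))).card •
          (((n : ℕ) : ℝ) ^ K * ‖z‖ ^ (n : ℕ)) := Finset.sum_le_card_nsmul _ _ _ hbound
      _ = ((n : ℕ) : ℝ) * ((n : ℕ) : ℝ) * (((n : ℕ) : ℝ) ^ K * ‖z‖ ^ (n : ℕ)) := by
          rw [hcard]; push_cast [nsmul_eq_mul]; ring
      _ ≤ ((n : ℕ) : ℝ) ^ k0 * ‖z‖ ^ (n : ℕ) := by
          have hn1 : (1 : ℝ) ≤ ((n : ℕ) : ℝ) := by exact_mod_cast n.pos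
          have hnpos : (0 : ℝ) < ((n : ℕ) : ℝ) := by linarith
          have h2 : ((n : ℕ) : ℝ) ^ (((2:ℕ):ℝ)) = ((n : ℕ) : ℝ) * ((n : ℕ) : ℝ) := by
            rw [Real.rpow_natCast]; ring
          have e1 : ((n : ℕ) : ℝ) * ((n : ℕ) : ℝ) * (((n : ℕ) : ℝ) ^ K * ‖z‖ ^ (n : ℕ))
              = ((n : ℕ) : ℝ) ^ (K + ((2:ℕ):ℝ)) * ‖z‖ ^ (n : ℕ) := by
            rw [Real.rpow_add hnpos K (((2:ℕ):ℝ)), h2]; ring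
          rw [e1]
          have e2 : ((n : ℕ) : ℝ) ^ (K + ((2:ℕ):ℝ)) ≤ ((n : ℕ) : ℝ) ^ (k0 : ℝ) := by
            apply Real.rpow_le_rpow_of_exponent_le hn1
            have hceil : K ≤ (⌈K⌉₊ : ℝ) := Nat.le_ceil K
            rw [hk0]; push_cast; linarith
          rw [← Real.rpow_natCast (((n:ℕ):ℝ)) k0]
          exact mul_le_mul_of_nonneg_right e2 (pow_nonneg (norm_nonneg z) _)

lemma vpv_factor_hasSum {a b c : ℂ} (habc : a + b + c = 1) {x y z : ℂ}
    (hx : ‖x‖ < 1) (hy : ‖y‖ < 1) (hz : ‖z‖ < 1) {l m n : ℕ}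
    (hl : 0 < l) (hm : 0 < m) (hn : 0 < n) :
    HasSum (fun k : ℕ+ => vpvG a b c x y z ((k : ℕ) * l, (k : ℕ) * m, (k : ℕ) * n))
      (Complex.log (1 / (1 - x ^ l * y ^ m * z ^ n)) *
        (1 / ((l : ℂ) ^ a * (m : ℂ) ^ b * (n : ℂ) ^ c))) := by
  have hw : ‖x ^ l * y ^ m * z ^ n‖ < 1 := vpv_w_lt hx hy hz hn
  set w : ℂ := x ^ l * y ^ m * z ^ n with hwdef
  set s : ℂ := 1 / ((l : ℂ) ^ a * (m : ℂ) ^ b * (n : ℂ) ^ c) with hsdef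
  have harg : (1 - w).arg ≠ Real.pi := by
    rw [Ne, Complex.arg_eq_pi_iff]
    rintro ⟨h1, -⟩
    have hre : w.re ≤ ‖w‖ := Complex.re_le_norm w
    have : (1 - w).re = 1 - w.re := by simp
    rw [this] at h1
    linarith
  have hlog : Complex.log (1 / (1 - w)) = -Complex.log (1 - w) := by
    rw [one_div, Complex.log_inv _ harg]
  have hTay := Complex.hasSum_taylorSeries_neg_log hw
  have hS := hTay.mul_right s
  rw [← hlog] at hS
  have hsupp : ∀ k : ℕ, k ∉ Set.range ((↑·) : ℕ+ → ℕ) → w ^ k / (k : ℂ) * s = 0 := by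
    intro k hk
    have hk0 : k = 0 := by
      by_contra h
      exact hk ⟨⟨k, Nat.pos_of_ne_zero h⟩, rfl⟩
    subst hk0; simp
  have key : ∀ k : ℕ+, vpvG a b c x y z ((k : ℕ) * l, (k : ℕ) * m, (k : ℕ) * n)
      = w ^ (k : ℕ) / ((k : ℕ) : ℂ) * s := by
    intro k
    have hkne : (((k : ℕ)) : ℂ) ≠ 0 := Nat.cast_ne_zero.mpr k.pos.ne'
    have e1 : ((((k : ℕ) * l : ℕ)) : ℂ) ^ a = (((k : ℕ)) : ℂ) ^ a * ((l : ℕ) : ℂ) ^ a := by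
      push_cast
      exact Complex.natCast_mul_natCast_cpow _ _ _
    have e2 : ((((k : ℕ) * m : ℕ)) : ℂ) ^ b = (((k : ℕ)) : ℂ) ^ b * ((m : ℕ) : ℂ) ^ b := by
      push_cast
      exact Complex.natCast_mul_natCast_cpow _ _ _
    have e3 : ((((k : ℕ) * n : ℕ)) : ℂ) ^ c = (((k : ℕ)) : ℂ) ^ c * ((n : ℕ) : ℂ) ^ c := by
      push_cast
      exact Complex.natCast_mul_natCast_cpow _ _ _
    have e4 : (((k : ℕ)) : ℂ) ^ a * (((k : ℕ)) : ℂ) ^ b * (((k : ℕ)) : ℂ) ^ c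
        = (((k : ℕ)) : ℂ) := by
      rw [← Complex.cpow_add _ _ hkne, ← Complex.cpow_add _ _ hkne, habc, Complex.cpow_one]
    show x ^ ((k : ℕ) * l) * y ^ ((k : ℕ) * m) * z ^ ((k : ℕ) * n) /
        (((((k : ℕ) * l : ℕ)) : ℂ) ^ a * ((((k : ℕ) * m : ℕ)) : ℂ) ^ b *
          ((((k : ℕ) * n : ℕ)) : ℂ) ^ c) = _
    rw [e1, e2, e3]
    have e5 : (((k:ℕ):ℂ) ^ a * (l : ℂ) ^ a) * ((((k:ℕ)):ℂ) ^ b * (m : ℂ) ^ b) *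
        ((((k:ℕ)):ℂ) ^ c * (n : ℂ) ^ c)
        = ((k:ℕ):ℂ) * ((l : ℂ) ^ a * (m : ℂ) ^ b * (n : ℂ) ^ c) := by
      linear_combination ((l : ℂ) ^ a * (m : ℂ) ^ b * (n : ℂ) ^ c) * e4
    rw [e5]
    have e6 : x ^ ((k : ℕ) * l) * y ^ ((k : ℕ) * m) * z ^ ((k : ℕ) * n) = w ^ (k : ℕ) := by
      rw [hwdef, mul_pow, mul_pow, ← pow_mul', ← pow_mul', ← pow_mul']
    rw [e6, hsdef, div_mul_div_comm, mul_one]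
  have hmain : HasSum ((fun k : ℕ => w ^ k / (k : ℂ) * s) ∘ ((↑·) : ℕ+ → ℕ))
      (Complex.log (1 / (1 - w)) * s) :=
    (Function.Injective.hasSum_iff PNat.coe_injective hsupp).mpr hS
  have hfval : (fun k : ℕ+ => vpvG a b c x y z ((k : ℕ) * l, (k : ℕ) * m, (k : ℕ) * n))
      = ((fun k : ℕ => w ^ k / (k : ℂ) * s) ∘ ((↑·) : ℕ+ → ℕ)) := funext fun k => key k
  rw [hfval]
  exact hmain

/-- The 3D first-hyperquadrant pyramid Visible Point Vector identity. -/
theorem stmt_9 (a b c : ℂ) (habc : a + b + c = 1) (x y z : ℂ)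
    (hx : ‖x‖ < 1) (hy : ‖y‖ < 1) (hz : ‖z‖ < 1) :
    (∏' p : {p : ℕ × ℕ × ℕ // 0 < p.1 ∧ 0 < p.2.1 ∧ 0 < p.2.2 ∧
        p.1 ≤ p.2.2 ∧ p.2.1 ≤ p.2.2 ∧ Nat.gcd p.1 (Nat.gcd p.2.1 p.2.2) = 1},
      (1 / (1 - x ^ p.1.1 * y ^ p.1.2.1 * z ^ p.1.2.2)) ^
        (1 / ((p.1.1 : ℂ) ^ a * (p.1.2.1 : ℂ) ^ b * (p.1.2.2 : ℂ) ^ c))) =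
    Complex.exp (∑' n : ℕ+,
      (∑ l ∈ Finset.Icc 1 (n : ℕ), x ^ l / (l : ℂ) ^ a) *
      (∑ m ∈ Finset.Icc 1 (n : ℕ), y ^ m / (m : ℂ) ^ b) *
      z ^ (n : ℕ) / ((n : ℕ) : ℂ) ^ c) := by
  classical
  -- summability on the sigma parametrization, pyramid, and visible × ℕ+
  have hsig : Summable (fun s : vpvSig =>
      vpvG a b c x y z ((s.2.1 : ℕ), (s.2.2 : ℕ), (s.1 : ℕ))) :=
    vpv_summable_sigma hx hy hz
  have hpyr : Summable (fun q : vpvPyr => vpvG a b c x y z q.1) :=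
    vpvPyrEquiv.symm.summable_iff.mp hsig
  set S : ℂ := ∑' q : vpvPyr, vpvG a b c x y z q.1 with hSdef
  have hF : HasSum (fun pk : vpvVis × ℕ+ => vpvG a b c x y z (vpvVisEquiv pk).1) S :=
    vpvVisEquiv.hasSum_iff.mpr hpyr.hasSum
  set T : vpvVis → ℂ := fun p =>
    Complex.log (1 / (1 - x ^ p.1.1 * y ^ p.1.2.1 * z ^ p.1.2.2)) *
      (1 / ((p.1.1 : ℂ) ^ a * (p.1.2.1 : ℂ) ^ b * (p.1.2.2 : ℂ) ^ c)) with hTdef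
  have hfib : ∀ p : vpvVis,
      HasSum (fun k : ℕ+ => vpvG a b c x y z (vpvVisEquiv (p, k)).1) (T p) := by
    rintro ⟨⟨l, m, n⟩, hl, hm, hn, -, -, -⟩
    exact vpv_factor_hasSum habc hx hy hz hl hm hn
  have hT : HasSum T S := hF.prod_fiberwise hfib
  have hP : HasProd (fun p : vpvVis => Complex.exp (T p)) (Complex.exp S) := by
    have h2 : Filter.Tendsto (fun fs : Finset vpvVis => Complex.exp (∑ i ∈ fs, T i))
        Filter.atTop (nhds (Complex.exp S)) := (Complex.continuous_exp.tendsto S).comp hT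
    exact h2.congr fun fs => Complex.exp_sum fs T
  have hfac : ∀ p : vpvVis,
      (1 / (1 - x ^ p.1.1 * y ^ p.1.2.1 * z ^ p.1.2.2)) ^
        (1 / ((p.1.1 : ℂ) ^ a * (p.1.2.1 : ℂ) ^ b * (p.1.2.2 : ℂ) ^ c)) =
      Complex.exp (T p) := by
    rintro ⟨⟨l, m, n⟩, hl, hm, hn, -, -, -⟩
    have hw : ‖x ^ l * y ^ m * z ^ n‖ < 1 := vpv_w_lt hx hy hz hn
    have h1w : (1 : ℂ) - x ^ l * y ^ m * z ^ n ≠ 0 := by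
      intro h
      have hw1 : x ^ l * y ^ m * z ^ n = 1 := by
        have := sub_eq_zero.mp h
        exact this.symm
      rw [hw1] at hw
      simp at hw
    have hne : (1 : ℂ) / (1 - x ^ l * y ^ m * z ^ n) ≠ 0 := one_div_ne_zero h1w
    rw [Complex.cpow_def_of_ne_zero hne]
  rw [tprod_congr hfac, hP.tprod_eq]
  congr 1
  -- now identify S with the triple sum
  have e1 : S = ∑' s : vpvSig, vpvG a b c x y z ((s.2.1 : ℕ), (s.2.2 : ℕ), (s.1 : ℕ)) :=
    (vpvPyrEquiv.symm.tsum_eq (fun q : vpvPyr => vpvG a b c x y z q.1)).symm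
  rw [e1]
  rw [Summable.tsum_sigma' (fun n => Summable.of_finite) hsig]
  refine tsum_congr fun n => ?_
  rw [tsum_fintype]
  rw [Fintype.sum_prod_type]
  have e2 : ∀ (lp : ↥(Finset.Icc 1 (n : ℕ))),
      ∑ mp : ↥(Finset.Icc 1 (n : ℕ)), vpvG a b c x y z ((lp : ℕ), (mp : ℕ), (n : ℕ))
      = ∑ m ∈ Finset.Icc 1 (n : ℕ), vpvG a b c x y z ((lp : ℕ), m, (n : ℕ)) := fun lp =>
    Finset.sum_coe_sort (Finset.Icc 1 (n : ℕ)) (fun m => vpvG a b c x y z ((lp : ℕ), m, (n : ℕ)))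
  rw [Finset.sum_congr rfl fun lp _ => e2 lp]
  rw [Finset.sum_coe_sort (Finset.Icc 1 (n : ℕ))
    (fun l => ∑ m ∈ Finset.Icc 1 (n : ℕ), vpvG a b c x y z (l, m, (n : ℕ)))]
  rw [Finset.sum_mul_sum, Finset.sum_mul, Finset.sum_div]
  refine Finset.sum_congr rfl fun l _ => ?_
  rw [Finset.sum_mul, Finset.sum_div]
  refine Finset.sum_congr rfl fun m _ => ?_
  show x ^ l * y ^ m * z ^ (n : ℕ) / ((l : ℂ) ^ a * (m : ℂ) ^ b * (((n : ℕ)) : ℂ) ^ c) = _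
  ring
end

section
/- Let y, z ∈ ℂ with |y| < 1, |z| < 1 and y ≠ 1. Then the infinite product over all pairs of integers (a,b) with a ≥ 0, b ≥ 1, a < b and gcd(a,b) = 1 of (1/(1 − y^a z^b))^(1/b) equals ((1 − yz)/(1 − z))^(1/(1 − y)). -/
open Complex Function

private lemma aux_re_pos {u : ℂ} (hu : ‖u‖ < 1) : 0 < (1 - u).re := by
  have : u.re ≤ ‖u‖ := (abs_le.mp (Complex.abs_re_le_norm u)).2
  simp only [sub_re, one_re]
  linarith

private lemma aux_ne {u : ℂ} (hu : ‖u‖ < 1) : 1 - u ≠ 0 := by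
  intro h
  have := aux_re_pos hu
  rw [h] at this
  simp at this

private lemma aux_arg_ne {u : ℂ} (hu : ‖u‖ < 1) : (1 - u).arg ≠ Real.pi := by
  intro h
  have h1 := (Complex.arg_eq_pi_iff.mp h).1
  have h2 := aux_re_pos hu
  linarith

private lemma aux_log_div {a b : ℂ} (ha : 0 < a.re) (hb : 0 < b.re) :
    Complex.log (a / b) = Complex.log a - Complex.log b := by
  have ha0 : a ≠ 0 := by intro h; rw [h] at ha; simp at ha
  have hb0 : b ≠ 0 := by intro h; rw [h] at hb; simp at hb
  have hbinv : 0 < (b⁻¹).re := by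
    rw [Complex.inv_re]
    exact div_pos hb (Complex.normSq_pos.mpr hb0)
  have h1 : |a.arg| < Real.pi / 2 := Complex.abs_arg_lt_pi_div_two_iff.mpr (Or.inl ha)
  have h2 : |(b⁻¹).arg| < Real.pi / 2 := Complex.abs_arg_lt_pi_div_two_iff.mpr (Or.inl hbinv)
  have hπ : 0 < Real.pi := Real.pi_pos
  have hmul : a.arg + (b⁻¹).arg ∈ Set.Ioc (-Real.pi) Real.pi := by
    constructor
    · nlinarith [abs_lt.mp h1, abs_lt.mp h2]
    · nlinarith [abs_lt.mp h1, abs_lt.mp h2]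
  have hargb : b.arg ≠ Real.pi := by
    intro h
    have := Complex.arg_eq_pi_iff.mp h
    linarith [this.1]
  rw [div_eq_mul_inv, Complex.log_mul ha0 (inv_ne_zero hb0) hmul,
    Complex.log_inv b hargb, sub_eq_add_neg]

theorem stmt_12 (y z : ℂ) (hy : ‖y‖ < 1) (hz : ‖z‖ < 1) (hy1 : y ≠ 1) :
    (∏' p : {p : ℕ × ℕ // 1 ≤ p.2 ∧ p.1 < p.2 ∧ Nat.gcd p.1 p.2 = 1},
      (1 / (1 - y ^ p.1.1 * z ^ p.1.2)) ^ (1 / (p.1.2 : ℂ))) =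
    ((1 - y * z) / (1 - z)) ^ (1 / (1 - y)) := by
  set I := {p : ℕ × ℕ // 1 ≤ p.2 ∧ p.1 < p.2 ∧ Nat.gcd p.1 p.2 = 1} with hI
  set u : ℕ × ℕ → ℂ := fun q => y ^ q.1 * z ^ q.2 with hu_def
  -- norm bound
  have hnorm : ∀ q : ℕ × ℕ, 1 ≤ q.2 → ‖u q‖ < 1 := by
    intro q hq
    have h1 : ‖y ^ q.1‖ ≤ 1 := by
      rw [norm_pow]; exact pow_le_one₀ (norm_nonneg _) hy.le
    have h2 : ‖z ^ q.2‖ < 1 := by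
      rw [norm_pow]; exact pow_lt_one₀ (norm_nonneg _) hz (by omega)
    calc ‖u q‖ = ‖y ^ q.1‖ * ‖z ^ q.2‖ := norm_mul _ _
      _ ≤ 1 * ‖z ^ q.2‖ := mul_le_mul_of_nonneg_right h1 (norm_nonneg _)
      _ < 1 := by simpa using h2
  set F : ℕ × ℕ → ℂ := fun q => if q.1 < q.2 then u q / (q.2 : ℂ) else 0 with hF_def
  -- summability of F in norm
  have hbound : ∀ q : ℕ × ℕ, ‖F q‖ ≤ ‖y‖ ^ q.1 * ‖z‖ ^ q.2 := by
    intro q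
    simp only [hF_def]
    split_ifs with h
    · have hq2 : (1 : ℕ) ≤ q.2 := by omega
      rw [norm_div, hu_def]
      simp only [norm_mul, norm_pow, Complex.norm_natCast]
      refine div_le_self (by positivity) ?_
      exact_mod_cast hq2
    · simp; positivity
  have hgeo : Summable (fun q : ℕ × ℕ => ‖y‖ ^ q.1 * ‖z‖ ^ q.2) :=
    (summable_geometric_of_lt_one (norm_nonneg y) hy).mul_of_nonneg
      (summable_geometric_of_lt_one (norm_nonneg z) hz)
      (fun n => by positivity) (fun n => by positivity)
  have hFnorm : Summable (fun q => ‖F q‖) :=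
    Summable.of_nonneg_of_le (fun _ => norm_nonneg _) hbound hgeo
  have hFsum : Summable F := hFnorm.of_norm
  -- the reindexing map
  set m : I × ℕ → ℕ × ℕ := fun x => ((x.2 + 1) * x.1.1.1, (x.2 + 1) * x.1.1.2) with hm_def
  have hm_inj : Function.Injective m := by
    rintro ⟨⟨⟨a, b⟩, hb, hab, hcop⟩, k⟩ ⟨⟨⟨a', b'⟩, hb', hab', hcop'⟩, k'⟩ h
    simp only [hm_def, Prod.mk.injEq] at h
    obtain ⟨h1, h2⟩ := h
    have hg : (k + 1) * Nat.gcd a b = (k' + 1) * Nat.gcd a' b' := by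
      rw [← Nat.gcd_mul_left, ← Nat.gcd_mul_left, h1, h2]
    rw [hcop, hcop'] at hg
    simp only [mul_one] at hg
    have hk : k = k' := by omega
    subst hk
    have ha : a = a' := by
      have := Nat.eq_of_mul_eq_mul_left (show 0 < k + 1 by omega) h1
      exact this
    have hbb : b = b' := Nat.eq_of_mul_eq_mul_left (show 0 < k + 1 by omega) h2
    subst ha; subst hbb; rfl
  have hm_range : Function.support F ⊆ Set.range m := by
    rintro ⟨a', b'⟩ hq
    have hab' : a' < b' := by
      by_contra h
      apply hq
      simp only [hF_def]
      rw [if_neg h]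
    have hb'pos : 0 < b' := by omega
    set d := Nat.gcd a' b' with hd
    have hdpos : 0 < d := Nat.gcd_pos_of_pos_right _ hb'pos
    have hdvd1 : d ∣ a' := Nat.gcd_dvd_left _ _
    have hdvd2 : d ∣ b' := Nat.gcd_dvd_right _ _
    refine ⟨⟨⟨⟨a' / d, b' / d⟩, ?_, ?_, ?_⟩, d - 1⟩, ?_⟩
    · exact (Nat.one_le_div_iff hdpos).mpr (Nat.le_of_dvd hb'pos hdvd2)
    · exact Nat.div_lt_div_of_lt_of_dvd hdvd2 hab'
    · exact Nat.coprime_div_gcd_div_gcd hdpos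
    · simp only [hm_def]
      have hd1 : d - 1 + 1 = d := by omega
      rw [hd1, Nat.mul_div_cancel' hdvd1, Nat.mul_div_cancel' hdvd2]
  have hGnorm : Summable (fun x : I × ℕ => ‖F (m x)‖) := hFnorm.comp_injective hm_inj
  have hGsum : Summable (fun x : I × ℕ => F (m x)) := hFsum.comp_injective hm_inj
  -- pointwise formula for F ∘ m
  have hFm : ∀ (p : I) (k : ℕ),
      F (m (p, k)) = (u p.1) ^ (k + 1) / (((k : ℂ) + 1) * (p.1.2 : ℂ)) := by
    rintro ⟨⟨a, b⟩, hb, hab, hcop⟩ k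
    have hlt : (k + 1) * a < (k + 1) * b :=
      Nat.mul_lt_mul_of_pos_left hab (by omega)
    simp only [hF_def, hm_def, hu_def, if_pos hlt]
    have h1 : y ^ ((k + 1) * a) = (y ^ a) ^ (k + 1) := by
      rw [← pow_mul, mul_comm]
    have h2 : z ^ ((k + 1) * b) = (z ^ b) ^ (k + 1) := by
      rw [← pow_mul, mul_comm]
    simp only [h1, h2, mul_pow]
    push_cast
    ring
  -- g : log terms
  set g : I → ℂ := fun p => -Complex.log (1 - u p.1) * (1 / (p.1.2 : ℂ)) with hg_def
  have hg_hasSum : ∀ p : I, HasSum (fun k : ℕ => F (m (p, k))) (g p) := by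
    intro p
    have hup : ‖u p.1‖ < 1 := hnorm _ p.2.1
    have H : HasSum (fun n : ℕ => (u p.1) ^ n / n) (-Complex.log (1 - u p.1)) :=
      hasSum_taylorSeries_neg_log hup
    have H1 : HasSum (fun n : ℕ => (u p.1) ^ (n + 1) / (n + 1))
        (-Complex.log (1 - u p.1)) := by
      rw [← hasSum_nat_add_iff' 1] at H
      simpa using H
    have H2 := H1.div_const (p.1.2 : ℂ)
    rw [hg_def]
    simp only [mul_one_div]
    refine H2.congr_fun fun k => ?_
    rw [hFm p k]
    push_cast
    rw [div_div]
  have hg_sum_eq : ∀ p : I, g p = ∑' k : ℕ, F (m (p, k)) :=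
    fun p => (hg_hasSum p).tsum_eq.symm
  -- summability of g
  have hnormsum : Summable (fun p : I => ∑' k : ℕ, ‖F (m (p, k))‖) := by
    have := (summable_prod_of_nonneg
      (f := fun x : I × ℕ => ‖F (m x)‖) (fun _ => norm_nonneg _)).mp hGnorm
    exact this.2
  have hgsummable : Summable g := by
    refine Summable.of_norm_bounded hnormsum fun p => ?_
    rw [hg_sum_eq p]
    exact norm_tsum_le_tsum_norm (hGnorm.prod_factor p)
  -- tsum over I equals tsum of F
  have htsum1 : ∑' p : I, g p = ∑' q : ℕ × ℕ, F q := by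
    rw [← hm_inj.tsum_eq hm_range]
    rw [Summable.tsum_prod' hGsum (fun p => (hg_hasSum p).summable)]
    exact tsum_congr fun p => hg_sum_eq p
  -- value of tsum F
  have hyz : ‖y * z‖ < 1 := by
    rw [norm_mul]
    calc ‖y‖ * ‖z‖ ≤ 1 * ‖z‖ := mul_le_mul_of_nonneg_right hy.le (norm_nonneg _)
      _ < 1 := by simpa using hz
  set S : ℂ := (Complex.log (1 - y * z) - Complex.log (1 - z)) * (1 - y)⁻¹ with hS_def
  have hinner : ∀ b : ℕ, ∑' a : ℕ, F (a, b) = (z ^ b - (y * z) ^ b) / b * (1 - y)⁻¹ := by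
    intro b
    have hfin : ∀ a : ℕ, a ∉ Finset.range b → F (a, b) = 0 := by
      intro a ha
      simp only [Finset.mem_range, not_lt] at ha
      simp only [hF_def]
      rw [if_neg (by omega)]
    rw [tsum_eq_sum hfin]
    rcases Nat.eq_zero_or_pos b with hb | hb
    · subst hb; simp
    · have hb0 : (b : ℂ) ≠ 0 := Nat.cast_ne_zero.mpr (by omega)
      have hsum : ∑ a ∈ Finset.range b, F (a, b)
          = (∑ a ∈ Finset.range b, y ^ a) * z ^ b / b := by
        rw [Finset.sum_mul, Finset.sum_div]
        refine Finset.sum_congr rfl fun a ha => ?_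
        simp only [Finset.mem_range] at ha
        simp only [hF_def, hu_def, if_pos ha]
      rw [hsum, geom_sum_eq hy1, mul_pow]
      have hy1' : y - 1 ≠ 0 := sub_ne_zero.mpr hy1
      have h1y : (1 : ℂ) - y ≠ 0 := sub_ne_zero.mpr (Ne.symm hy1)
      field_simp
      ring
  have hFswap : Summable (fun x : ℕ × ℕ => F (x.2, x.1)) := by
    have := (Equiv.prodComm ℕ ℕ).summable_iff.mpr hFsum
    exact this
  have htsum2 : ∑' q : ℕ × ℕ, F q = S := by
    have e1 : ∑' q : ℕ × ℕ, F q = ∑' x : ℕ × ℕ, F (x.2, x.1) := by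
      rw [← (Equiv.prodComm ℕ ℕ).tsum_eq (f := F)]
      rfl
    rw [e1, Summable.tsum_prod' hFswap (fun b => hFswap.prod_factor b)]
    have h4 := ((hasSum_taylorSeries_neg_log hz).sub
      (hasSum_taylorSeries_neg_log hyz)).mul_right (1 - y)⁻¹
    have h5 : (-Complex.log (1 - z) - -Complex.log (1 - y * z)) * (1 - y)⁻¹ = S := by
      rw [hS_def]; ring
    have h6 : HasSum (fun b : ℕ => (z ^ b - (y * z) ^ b) / b * (1 - y)⁻¹) S := by
      rw [← h5]
      exact h4.congr_fun fun b => by rw [sub_div]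
    rw [tsum_congr hinner]
    exact h6.tsum_eq
  -- RHS as exponential
  have hz' : 0 < (1 - z).re := aux_re_pos hz
  have hyz' : 0 < (1 - y * z).re := aux_re_pos hyz
  have hbase : (1 - y * z) / (1 - z) ≠ 0 := div_ne_zero (aux_ne hyz) (aux_ne hz)
  have hRHS : ((1 - y * z) / (1 - z)) ^ (1 / (1 - y)) = Complex.exp S := by
    rw [Complex.cpow_def_of_ne_zero hbase, aux_log_div hyz' hz', hS_def, one_div]
  -- LHS factors as exponentials
  have hLHS : (fun p : I => (1 / (1 - y ^ p.1.1 * z ^ p.1.2)) ^ (1 / (p.1.2 : ℂ)))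
      = fun p : I => Complex.exp (g p) := by
    funext p
    have hup : ‖u p.1‖ < 1 := hnorm _ p.2.1
    have h1 : (1 : ℂ) / (1 - y ^ p.1.1 * z ^ p.1.2) = (1 - u p.1)⁻¹ := one_div _
    rw [h1, Complex.cpow_def_of_ne_zero (inv_ne_zero (aux_ne hup)) _,
      Complex.log_inv _ (aux_arg_ne hup)]
  have hgS : HasSum g S := by
    have h7 := hgsummable.hasSum
    rwa [htsum1, htsum2] at h7
  have hprod : HasProd (fun p : I => Complex.exp (g p)) (Complex.exp S) := hgS.cexp
  rw [hRHS]
  rw [show (fun p : I => (1 / (1 - y ^ p.1.1 * z ^ p.1.2)) ^ (1 / (p.1.2 : ℂ)))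
      = fun p : I => Complex.exp (g p) from hLHS] at *
  exact hprod.tprod_eq
end
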